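/- For all nonnegative integers n and real parameters α, β (with β, α+1 avoiding nonpositive integer degeneracies), the Hendriksen–van Rossum polynomial satisfies the inversion formula z^n · P_n(1/z; α, β) = ((β)_n / (α+1)_n) · P_n(z; β−1, α+1) as an identity of Laurent polynomials in z. -/

import Mathlib

open Finset

noncomputable def poch (a : ℝ) (k : ℕ) : ℝ := ∏ i ∈ Finset.range k, (a + i)

noncomputable def HR (n : ℕ) (α β : ℝ) (z : ℝ) : ℝ :=
  (poch β n / poch (α + 1) n) *
    ∑ k ∈ Finset.range (n + 1),
      (poch (-(n : ℝ)) k * poch (α + 1) k) / ((k.factorial : ℝ) * poch (1 - β - (n : ℝ)) k) * z ^ k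

lemma poch_ne_zero (a : ℝ) (k : ℕ) (h : ∀ i < k, a + (i : ℝ) ≠ 0) : poch a k ≠ 0 := by
  unfold poch
  exact Finset.prod_ne_zero_iff.mpr (fun i hi => h i (Finset.mem_range.mp hi))

lemma poch_shift (b : ℝ) (k : ℕ) : poch b (k + 1) = b * poch (b + 1) k := by
  unfold poch
  rw [Finset.prod_range_succ', mul_comm]
  congr 1
  · push_cast; ring
  · apply Finset.prod_congr rfl
    intros i _
    push_cast; ring

lemma poch_reflect : ∀ (k : ℕ) (a : ℝ), poch a k = (-1) ^ k * poch (1 - a - (k : ℝ)) k := by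
  intro k
  induction k with
  | zero => intro a; simp [poch]
  | succ k ih =>
    intro a
    have h1 : poch a (k + 1) = poch a k * (a + k) := by
      unfold poch; rw [Finset.prod_range_succ]
    have h2 : poch (1 - a - ((k + 1 : ℕ) : ℝ)) (k + 1)
        = (1 - a - ((k + 1 : ℕ) : ℝ)) * poch (1 - a - ((k + 1 : ℕ) : ℝ) + 1) k :=
      poch_shift _ _
    have h3 : (1 - a - ((k + 1 : ℕ) : ℝ) + 1) = 1 - a - (k : ℝ) := by push_cast; ring
    rw [h1, h2, h3]
    push_cast
    linear_combination (a + (k : ℝ)) * ih a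

lemma poch_add (a : ℝ) (m k : ℕ) : poch a (m + k) = poch a m * poch (a + m) k := by
  unfold poch
  rw [Finset.prod_range_add]
  congr 1
  apply Finset.prod_congr rfl
  intros i _
  push_cast; ring

lemma pochR (a : ℝ) (n j : ℕ) (hj : j ≤ n) :
    poch a n = poch a (n - j) * ((-1) ^ j * poch (1 - a - (n : ℝ)) j) := by
  have h : poch a n = poch a (n - j) * poch (a + ((n - j : ℕ) : ℝ)) j := by
    conv_lhs => rw [← Nat.sub_add_cancel hj, poch_add]
  rw [h, poch_reflect j (a + ((n - j : ℕ) : ℝ)), Nat.cast_sub hj,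
    show (1 : ℝ) - (a + ((n : ℝ) - (j : ℝ))) - (j : ℝ) = 1 - a - n from by ring]

lemma pochNeg (n : ℕ) : ∀ j, j ≤ n →
    poch (-(n : ℝ)) j * ((n - j).factorial : ℝ) = (-1) ^ j * (n.factorial : ℝ) := by
  intro j
  induction j with
  | zero => intro _; simp [poch]
  | succ j ih =>
    intro hj
    have hj' : j ≤ n := Nat.le_of_succ_le hj
    have h1 : poch (-(n : ℝ)) (j + 1) = poch (-(n : ℝ)) j * (-(n : ℝ) + j) := by
      unfold poch; rw [Finset.prod_range_succ]
    have h3 : (n - j).factorial = (n - j) * (n - (j + 1)).factorial := by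
      rw [show n - j = (n - (j + 1)) + 1 from by omega, Nat.factorial_succ]
    have ihh := ih hj'
    have h3' : ((n - j).factorial : ℝ) = ((n : ℝ) - j) * ((n - (j + 1)).factorial : ℝ) := by
      rw [h3]
      push_cast [Nat.cast_sub hj']
      ring
    rw [h3'] at ihh
    rw [h1]
    linear_combination -ihh

set_option maxHeartbeats 1600000 in
theorem hr_inversion (n : ℕ) (α β : ℝ)
    (hβ : ∀ j < n, β + (j : ℝ) ≠ 0)
    (hα : ∀ j < n, α + 1 + (j : ℝ) ≠ 0)
    (hd : ∀ j < n, 1 - β - (n : ℝ) + (j : ℝ) ≠ 0) :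
    ∀ z : ℝ, z ≠ 0 →
      z ^ n * HR n α β (1 / z) =
        (poch β n / poch (α + 1) n) * HR n (β - 1) (α + 1) z := by
  intro z hz
  have hβn : poch β n ≠ 0 := poch_ne_zero _ _ hβ
  have hα1n : poch (α + 1) n ≠ 0 := poch_ne_zero _ _ hα
  simp only [HR]
  rw [show β - 1 + 1 = β from by ring]
  rw [Finset.mul_sum, Finset.mul_sum, Finset.mul_sum, Finset.mul_sum,
    ← Finset.sum_range_reflect]
  apply Finset.sum_congr rfl
  intro j hjm
  have hj : j ≤ n := Nat.lt_succ_iff.mp (Finset.mem_range.mp hjm)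
  simp only [Nat.add_sub_cancel]
  -- nonzero facts
  have hβj : poch β j ≠ 0 := poch_ne_zero _ _ (fun i hi => hβ i (lt_of_lt_of_le hi hj))
  have hDj : poch (1 - (α + 1) - (n : ℝ)) j ≠ 0 := by
    apply poch_ne_zero
    intro i hi
    have hin : i < n := lt_of_lt_of_le hi hj
    have h := hα (n - 1 - i) (by omega)
    have hc : ((n - 1 - i : ℕ) : ℝ) = (n : ℝ) - 1 - i := by
      push_cast [Nat.cast_sub (show 1 + i ≤ n from by omega),
        show n - 1 - i = n - (1 + i) from by omega]
      ring
    rw [hc] at h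
    intro hcon
    apply h
    linarith
  have hdnj : poch (1 - β - (n : ℝ)) (n - j) ≠ 0 :=
    poch_ne_zero _ _ (fun i hi => hd i (by omega))
  have hjf : (j.factorial : ℝ) ≠ 0 := Nat.cast_ne_zero.mpr (Nat.factorial_ne_zero _)
  have hnjf : ((n - j).factorial : ℝ) ≠ 0 := Nat.cast_ne_zero.mpr (Nat.factorial_ne_zero _)
  have hs : ((-1 : ℝ)) ^ j ≠ 0 := pow_ne_zero _ (by norm_num)
  -- sign identity
  have hjj : (-1 : ℝ) ^ j * (-1 : ℝ) ^ j = 1 := by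
    rw [← mul_pow]; norm_num
  have hsign : (-1 : ℝ) ^ (n - j) = (-1 : ℝ) ^ n * (-1 : ℝ) ^ j := by
    have h : (-1 : ℝ) ^ n = (-1) ^ (n - j) * (-1) ^ j := by
      rw [← pow_add, Nat.sub_add_cancel hj]
    rw [h, mul_assoc, hjj, mul_one]
  -- key identities
  have E1 : poch (-(n : ℝ)) (n - j) * (j.factorial : ℝ) = (-1) ^ (n - j) * n.factorial := by
    have h := pochNeg n (n - j) (Nat.sub_le n j)
    rwa [Nat.sub_sub_self hj] at h
  have E2 : poch (-(n : ℝ)) j * ((n - j).factorial : ℝ) = (-1) ^ j * n.factorial :=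
    pochNeg n j hj
  have E3 := pochR (α + 1) n j hj
  have E4 := pochR (1 - β - (n : ℝ)) n j hj
  rw [show 1 - (1 - β - (n : ℝ)) - (n : ℝ) = β from by ring] at E4
  have E5 := poch_reflect n (1 - β - (n : ℝ))
  rw [show 1 - (1 - β - (n : ℝ)) - (n : ℝ) = β from by ring] at E5
  -- division forms
  have e1 : poch (-(n : ℝ)) (n - j) = ((-1) ^ n * (-1) ^ j * n.factorial) / j.factorial := by
    rw [← hsign]; exact eq_div_of_mul_eq hjf E1
  have e2 : poch (-(n : ℝ)) j = ((-1) ^ j * n.factorial) / (n - j).factorial :=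
    eq_div_of_mul_eq hnjf E2
  have e3 : poch (α + 1) (n - j)
      = poch (α + 1) n / ((-1) ^ j * poch (1 - (α + 1) - (n : ℝ)) j) :=
    eq_div_of_mul_eq (mul_ne_zero hs hDj) E3.symm
  have e4 : poch (1 - β - (n : ℝ)) (n - j)
      = ((-1) ^ n * poch β n) / ((-1) ^ j * poch β j) := by
    apply eq_div_of_mul_eq (mul_ne_zero hs hβj)
    rw [← E4, E5]
  -- powers of z
  have hzz : z ^ n = z ^ j * z ^ (n - j) := by
    rw [← pow_add, Nat.add_sub_cancel' hj]
  have hz1 : (1 / z) ^ (n - j) = z ^ j / z ^ n := by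
    rw [div_pow, one_pow, hzz, ← div_div, div_self (pow_ne_zero _ hz)]
  rw [e1, e2, e3, e4, hz1]
  have hz2 : z ^ n * z⁻¹ ^ n = 1 := by
    rw [← mul_pow, mul_inv_cancel₀ hz, one_pow]
  field_simp
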